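/- arXiv:0802.1945 — 3 statements merged into one kernel-verified Lean document; each statement's English description precedes it below -/
import Mathlib

section
/- Let K be a field, q ∈ K not a root of unity or q = 1, h ∈ K with (q,h) ≠ (1,0), and c ∈ K. Define (T-c)_{q,h}^{[0]} = 1 and (T-c)_{q,h}^{[n]} = (T-c)(T-σ(c))⋯(T-σ^{n-1}(c)) where σ(x) = qx + h. Define the twisted derivative d_{q,h}(f)(T) = (f(qT+h) - f(T)) / ((q-1)T + h) on polynomials. Then d_{q,h}((T-c)_{q,h}^{[n]}) = [n]_q · (T-c)_{q,h}^{[n-1]} for all n ≥ 1. -/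
open Polynomial

lemma iter_aff {K : Type*} [Field K] (q h c : K) (k : ℕ) :
    (fun x : K => q * x + h)^[k] c = q ^ k * c + (∑ i ∈ Finset.range k, q ^ i) * h := by
  induction k with
  | zero => simp
  | succ k ih =>
      rw [Function.iterate_succ_apply', ih, Finset.sum_range_succ']
      simp only [pow_succ, pow_zero, ← Finset.sum_mul]
      ring

/-- Twisted derivative of the twisted powers: with `σ(x) = qx + h`,
`(T-c)_{q,h}^{[n]} = ∏_{k<n} (T - σ^k(c))` and
`d_{q,h}(f)(T) = (f(qT+h) - f(T)) / ((q-1)T + h)`, one has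
`d_{q,h}((T-c)_{q,h}^{[n]}) = [n]_q · (T-c)_{q,h}^{[n-1]}` for `n ≥ 1`
(stated after clearing the denominator `(q-1)T + h`). -/
theorem stmt4 {K : Type*} [Field K] [CharZero K] (q h c : K) (hq0 : q ≠ 0)
    (hq : q ≠ 1 → ∀ n : ℕ, 0 < n → q ^ n ≠ 1) (hqh : (q, h) ≠ (1, 0)) (n : ℕ) (hn : 1 ≤ n) :
    (∏ k ∈ Finset.range n, (X - C ((fun x : K => q * x + h)^[k] c))).comp (C q * X + C h)
        - ∏ k ∈ Finset.range n, (X - C ((fun x : K => q * x + h)^[k] c))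
      = C (∑ i ∈ Finset.range n, q ^ i) * ((C (q - 1) * X + C h)
        * ∏ k ∈ Finset.range (n - 1), (X - C ((fun x : K => q * x + h)^[k] c))) := by
  obtain ⟨m, rfl⟩ : ∃ m, n = m + 1 := ⟨n - 1, (Nat.succ_pred_eq_of_pos hn).symm⟩
  simp only [Nat.add_sub_cancel]
  have hcomp : (∏ k ∈ Finset.range (m + 1),
      (X - C ((fun x : K => q * x + h)^[k] c))).comp (C q * X + C h)
      = (C q) ^ m * (∏ k ∈ Finset.range m, (X - C ((fun x : K => q * x + h)^[k] c)))
        * (C q * X + C h - C c) := by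
    rw [Polynomial.prod_comp]
    simp only [sub_comp, X_comp, C_comp]
    rw [Finset.prod_range_succ']
    have key : ∀ k ∈ Finset.range m,
        C q * X + C h - C ((fun x : K => q * x + h)^[k + 1] c)
          = C q * (X - C ((fun x : K => q * x + h)^[k] c)) := by
      intro k _
      rw [Function.iterate_succ_apply']
      simp only [map_add, map_mul]
      ring
    rw [Finset.prod_congr rfl key, Finset.prod_mul_distrib, Finset.prod_const,
      Finset.card_range]
    simp only [Function.iterate_zero, id_eq]
  rw [hcomp, Finset.prod_range_succ, iter_aff q h c m]
  simp only [map_add, map_mul, map_sub, map_pow, map_sum, map_one]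
  linear_combination
    -((∏ k ∈ Finset.range m, (X - C ((fun x : K => q * x + h)^[k] c))) * X
        * geom_sum_mul (C q) (m + 1))
    - (∏ k ∈ Finset.range m, (X - C ((fun x : K => q * x + h)^[k] c))) * C h
        * Finset.sum_range_succ (fun i => (C q) ^ i) m
end

section
/- Let K be a complete non-archimedean field, q, h ∈ K with |q-1| < 1, and let c ∈ K and ρ > 0 satisfy |(q-1)c + h| < ρ. If f(T) = ∑_{n≥0} a_n (T-c)^n converges on the open disc of radius R > ρ around c and is also written f(T) = ∑_{n≥0} ã_n (T-c)_{q,h}^{[n]} in the twisted basis, then sup_n |a_n| ρ^n = sup_n |ã_n| ρ^n. -/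
set_option linter.unusedSectionVars false
set_option linter.unusedVariables false
set_option maxHeartbeats 1000000
open Filter Finset Topology

section Aux

variable {K : Type*} [NontriviallyNormedField K] [IsUltrametricDist K]

/-- Twisted product `∏_{k<n} (x - d k)`. -/
def twP (d : ℕ → K) (x : K) (n : ℕ) : K := ∏ k ∈ Finset.range n, (x - d k)

lemma twP_zero (d : ℕ → K) (x : K) : twP d x 0 = 1 := by simp [twP]

lemma twP_succ (d : ℕ → K) (x : K) (n : ℕ) : twP d x (n + 1) = twP d x n * (x - d n) := by
  simp [twP, Finset.prod_range_succ]

lemma twP_add (d : ℕ → K) (x : K) (m n : ℕ) :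
    twP d x (m + n) = twP d x m * twP (fun k => d (m + k)) x n := by
  simp [twP, Finset.prod_range_add]

lemma twP_succ' (d : ℕ → K) (x : K) (n : ℕ) :
    twP d x (n + 1) = (x - d 0) * twP (fun k => d (k + 1)) x n := by
  rw [twP, Finset.prod_range_succ' (fun k => (x - d k)) n]
  rw [twP, mul_comm]

lemma norm_sub_le_max' (x y : K) : ‖x - y‖ ≤ max ‖x‖ ‖y‖ := by
  rw [sub_eq_add_neg]
  simpa using IsUltrametricDist.norm_add_le_max x (-y)

lemma norm_twP_le {d : ℕ → K} {δ : ℝ} (hd : ∀ k, ‖d k‖ ≤ δ) (x : K) (n : ℕ) :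
    ‖twP d x n‖ ≤ (max ‖x‖ δ) ^ n := by
  rw [twP, norm_prod]
  calc ∏ k ∈ Finset.range n, ‖x - d k‖ ≤ ∏ _k ∈ Finset.range n, (max ‖x‖ δ) := by
        apply Finset.prod_le_prod (fun _ _ => norm_nonneg _)
        intro k _
        exact (norm_sub_le_max' x (d k)).trans
          (max_le_max le_rfl (hd k))
      _ = (max ‖x‖ δ) ^ n := by simp

lemma norm_add_eq_left {x y : K} (h : ‖y‖ < ‖x‖) : ‖x + y‖ = ‖x‖ := by
  refine le_antisymm ((IsUltrametricDist.norm_add_le_max x y).trans (max_le le_rfl h.le)) ?_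
  by_contra hlt
  push_neg at hlt
  have h2 : ‖x‖ ≤ max ‖x + y‖ ‖y‖ := by
    simpa using IsUltrametricDist.norm_add_le_max (x + y) (-y)
  rcases max_cases ‖x + y‖ ‖y‖ with ⟨he, _⟩ | ⟨he, _⟩ <;> rw [he] at h2 <;> linarith

/-- Newton coefficients: `x^j = ∑_{n ≤ j} Nc d j n * twP d x n`. -/
def Nc (d : ℕ → K) : ℕ → ℕ → K
  | 0, 0 => 1
  | 0, _ + 1 => 0
  | j + 1, 0 => d 0 * Nc d j 0
  | j + 1, n + 1 => Nc d j n + d (n + 1) * Nc d j (n + 1)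

lemma Nc_eq_zero (d : ℕ → K) : ∀ j n, j < n → Nc d j n = 0 := by
  intro j
  induction j with
  | zero => intro n hn; match n, hn with | (m+1), _ => rfl
  | succ j ih =>
    intro n hn
    match n, hn with
    | (n+1), hn =>
      show Nc d j n + d (n + 1) * Nc d j (n + 1) = 0
      rw [ih n (by omega), ih (n+1) (by omega)]
      ring

lemma norm_Nc_le {d : ℕ → K} {δ : ℝ} (hd : ∀ k, ‖d k‖ ≤ δ) :
    ∀ j n, ‖Nc d j n‖ ≤ δ ^ (j - n) := by
  have hδ0 : 0 ≤ δ := (norm_nonneg _).trans (hd 0)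
  intro j
  induction j with
  | zero =>
    intro n
    match n with
    | 0 => simp [Nc]
    | n + 1 => simp [Nc, hδ0]
  | succ j ih =>
    intro n
    match n with
    | 0 =>
      show ‖d 0 * Nc d j 0‖ ≤ δ ^ (j + 1)
      rw [norm_mul]
      calc ‖d 0‖ * ‖Nc d j 0‖ ≤ δ * δ ^ j :=
            mul_le_mul (hd 0) (ih 0) (norm_nonneg _) hδ0
        _ = δ ^ (j + 1) := (pow_succ' δ j).symm
    | n + 1 =>
      show ‖Nc d j n + d (n + 1) * Nc d j (n + 1)‖ ≤ δ ^ (j + 1 - (n + 1))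
      rcases le_or_gt n j with hnj | hnj
      · refine (IsUltrametricDist.norm_add_le_max _ _).trans (max_le ?_ ?_)
        · simpa [Nat.succ_sub_succ] using ih n
        · rcases eq_or_lt_of_le hnj with rfl | hlt
          · simp [Nc_eq_zero d n (n+1) (by omega), pow_nonneg hδ0]
          · rw [norm_mul]
            have h1 : δ ^ (j - (n + 1)) * δ = δ ^ (j - n) := by
              rw [← pow_succ]
              congr 1
              omega
            calc ‖d (n+1)‖ * ‖Nc d j (n+1)‖ ≤ δ * δ ^ (j - (n+1)) :=
                  mul_le_mul (hd _) (ih (n+1)) (norm_nonneg _) hδ0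
                _ = δ ^ (j + 1 - (n + 1)) := by rw [mul_comm, h1]; congr 1; omega
      · rw [Nc_eq_zero d j n hnj, Nc_eq_zero d j (n+1) (by omega)]
        simp [pow_nonneg hδ0]

lemma pow_eq_sum_Nc (d : ℕ → K) (x : K) :
    ∀ j, x ^ j = ∑ n ∈ Finset.range (j + 1), Nc d j n * twP d x n := by
  intro j
  induction j with
  | zero => simp [Nc, twP]
  | succ j ih =>
    have expand : ∀ n, x * twP d x n = twP d x (n+1) + d n * twP d x n := by
      intro n; rw [twP_succ]; ring
    calc x ^ (j + 1) = x * ∑ n ∈ Finset.range (j + 1), Nc d j n * twP d x n := by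
          rw [← ih, pow_succ, mul_comm]
      _ = ∑ n ∈ Finset.range (j + 1), Nc d j n * twP d x (n+1)
          + ∑ n ∈ Finset.range (j + 1), d n * Nc d j n * twP d x n := by
          rw [Finset.mul_sum, ← Finset.sum_add_distrib]
          apply Finset.sum_congr rfl
          intro n _
          rw [show x * (Nc d j n * twP d x n) = Nc d j n * (x * twP d x n) by ring, expand n]
          ring
      _ = ∑ n ∈ Finset.range (j + 2), Nc d (j+1) n * twP d x n := by
          rw [Finset.sum_range_succ' (fun n => Nc d (j+1) n * twP d x n) (j+1)]
          have h0 : Nc d (j+1) 0 * twP d x 0 = d 0 * Nc d j 0 * twP d x 0 := rfl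
          rw [h0]
          have hsplit : ∀ n ∈ Finset.range (j+1),
              Nc d (j+1) (n+1) * twP d x (n+1)
              = Nc d j n * twP d x (n+1) + d (n+1) * Nc d j (n+1) * twP d x (n+1) := by
            intro n _
            show (Nc d j n + d (n + 1) * Nc d j (n + 1)) * twP d x (n+1) = _
            ring
          rw [Finset.sum_congr rfl hsplit, Finset.sum_add_distrib]
          -- now regroup: second pieces + the 0-term = ∑_{n ∈ range (j+1)} d n * Nc d j n * twP d x n
          have : ∑ n ∈ Finset.range (j+1), d (n+1) * Nc d j (n+1) * twP d x (n+1)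
              + d 0 * Nc d j 0 * twP d x 0
              = ∑ n ∈ Finset.range (j+2), d n * Nc d j n * twP d x n := by
            rw [Finset.sum_range_succ' (fun n => d n * Nc d j n * twP d x n) (j+1)]
          rw [add_assoc, this, Finset.sum_range_succ (fun n => d n * Nc d j n * twP d x n) (j+1),
            Nc_eq_zero d j (j+1) (by omega)]
          ring

/-- Coefficients of `twP d x n` as a polynomial in `x`. -/
def Ec (d : ℕ → K) : ℕ → ℕ → K
  | 0, 0 => 1
  | 0, _ + 1 => 0
  | n + 1, 0 => - (d n * Ec d n 0)
  | n + 1, j + 1 => Ec d n j - d n * Ec d n (j + 1)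

lemma Ec_eq_zero (d : ℕ → K) : ∀ n j, n < j → Ec d n j = 0 := by
  intro n
  induction n with
  | zero => intro j hj; match j, hj with | (m+1), _ => rfl
  | succ n ih =>
    intro j hj
    match j, hj with
    | (j+1), hj =>
      show Ec d n j - d n * Ec d n (j + 1) = 0
      rw [ih j (by omega), ih (j+1) (by omega)]
      ring

lemma norm_Ec_le {d : ℕ → K} {δ : ℝ} (hd : ∀ k, ‖d k‖ ≤ δ) :
    ∀ n j, ‖Ec d n j‖ ≤ δ ^ (n - j) := by
  have hδ0 : 0 ≤ δ := (norm_nonneg _).trans (hd 0)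
  intro n
  induction n with
  | zero =>
    intro j
    match j with
    | 0 => simp [Ec]
    | j + 1 => simp [Ec, hδ0]
  | succ n ih =>
    intro j
    match j with
    | 0 =>
      show ‖-(d n * Ec d n 0)‖ ≤ δ ^ (n + 1)
      rw [norm_neg, norm_mul]
      calc ‖d n‖ * ‖Ec d n 0‖ ≤ δ * δ ^ n :=
            mul_le_mul (hd n) (ih 0) (norm_nonneg _) hδ0
        _ = δ ^ (n + 1) := (pow_succ' δ n).symm
    | j + 1 =>
      show ‖Ec d n j - d n * Ec d n (j + 1)‖ ≤ δ ^ (n + 1 - (j + 1))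
      rcases le_or_gt j n with hjn | hjn
      · rw [sub_eq_add_neg]
        refine (IsUltrametricDist.norm_add_le_max _ _).trans (max_le ?_ ?_)
        · simpa [Nat.succ_sub_succ] using ih j
        · rcases eq_or_lt_of_le hjn with rfl | hlt
          · simp [Ec_eq_zero d j (j+1) (by omega), pow_nonneg hδ0]
          · rw [norm_neg, norm_mul]
            calc ‖d n‖ * ‖Ec d n (j+1)‖ ≤ δ * δ ^ (n - (j+1)) :=
                  mul_le_mul (hd n) (ih (j+1)) (norm_nonneg _) hδ0
              _ = δ ^ (n + 1 - (j + 1)) := by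
                  rw [← pow_succ']
                  congr 1
                  omega
      · rw [Ec_eq_zero d n j hjn, Ec_eq_zero d n (j+1) (by omega)]
        simp [pow_nonneg hδ0]

lemma twP_eq_sum_Ec (d : ℕ → K) (x : K) :
    ∀ n, twP d x n = ∑ j ∈ Finset.range (n + 1), Ec d n j * x ^ j := by
  intro n
  induction n with
  | zero => simp [Ec, twP]
  | succ n ih =>
    calc twP d x (n+1) = (∑ j ∈ Finset.range (n + 1), Ec d n j * x ^ j) * (x - d n) := by
          rw [twP_succ, ih]
      _ = ∑ j ∈ Finset.range (n + 1), Ec d n j * x ^ (j+1)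
          - ∑ j ∈ Finset.range (n + 1), d n * Ec d n j * x ^ j := by
          rw [Finset.sum_mul, ← Finset.sum_sub_distrib]
          apply Finset.sum_congr rfl
          intro j _
          ring
      _ = ∑ j ∈ Finset.range (n + 2), Ec d (n+1) j * x ^ j := by
          rw [Finset.sum_range_succ' (fun j => Ec d (n+1) j * x ^ j) (n+1)]
          have h0 : Ec d (n+1) 0 * x ^ 0 = -(d n * Ec d n 0) * x ^ 0 := rfl
          rw [h0]
          have hsplit : ∀ j ∈ Finset.range (n+1),
              Ec d (n+1) (j+1) * x ^ (j+1)
              = Ec d n j * x ^ (j+1) - d n * Ec d n (j+1) * x ^ (j+1) := by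
            intro j _
            show (Ec d n j - d n * Ec d n (j + 1)) * x ^ (j+1) = _
            ring
          rw [Finset.sum_congr rfl hsplit, Finset.sum_sub_distrib]
          have hre : ∑ j ∈ Finset.range (n+1), d n * Ec d n (j+1) * x ^ (j+1)
              + d n * Ec d n 0 * x ^ 0
              = ∑ j ∈ Finset.range (n+2), d n * Ec d n j * x ^ j := by
            rw [Finset.sum_range_succ' (fun j => d n * Ec d n j * x ^ j) (n+1)]
          have hlast : ∑ j ∈ Finset.range (n+2), d n * Ec d n j * x ^ j
              = ∑ j ∈ Finset.range (n+1), d n * Ec d n j * x ^ j := by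
            rw [Finset.sum_range_succ (fun j => d n * Ec d n j * x ^ j) (n+1),
              Ec_eq_zero d n (n+1) (by omega)]
            ring
          rw [← hlast, ← hre]
          ring


lemma twP_const_zero (x : K) (n : ℕ) : twP (fun _ => (0:K)) x n = x ^ n := by
  simp [twP]

variable [CompleteSpace K]

lemma tendsto_geom_aux {θ : ℝ} (M : ℝ) (hθ0 : 0 ≤ θ) (hθ1 : θ < 1) :
    Tendsto (fun n : ℕ => M * θ ^ n) atTop (𝓝 0) := by
  simpa using (tendsto_pow_atTop_nhds_zero_of_lt_one hθ0 hθ1).const_mul M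

lemma summable_of_norm_le_aux {f : ℕ → K} {u : ℕ → ℝ} (hb : ∀ n, ‖f n‖ ≤ u n)
    (hu : Tendsto u atTop (𝓝 0)) : Summable f :=
  NonarchimedeanAddGroup.summable_of_tendsto_cofinite_zero
    (by rw [Nat.cofinite_eq_atTop]; exact squeeze_zero_norm hb hu)
lemma tendsto_geom_shift_aux {θ : ℝ} (M : ℝ) (j : ℕ) (hθ0 : 0 ≤ θ) (hθ1 : θ < 1) :
    Tendsto (fun n : ℕ => M * θ ^ (n - j)) atTop (𝓝 0) :=
  (tendsto_geom_aux M hθ0 hθ1).comp (tendsto_sub_atTop_nat j)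

lemma summable_pair {F : ℕ × ℕ → K} {M θ : ℝ} (hθ0 : 0 ≤ θ) (hθ1 : θ < 1)
    (h0 : ∀ p : ℕ × ℕ, p.1 < p.2 → F p = 0)
    (hb : ∀ p : ℕ × ℕ, ‖F p‖ ≤ M * θ ^ p.1) : Summable F := by
  apply NonarchimedeanAddGroup.summable_of_tendsto_cofinite_zero
  rw [Metric.tendsto_nhds]
  intro ε hε
  rw [Filter.eventually_cofinite]
  obtain ⟨N, hN⟩ := Filter.eventually_atTop.mp
    ((tendsto_geom_aux M hθ0 hθ1).eventually (gt_mem_nhds hε))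
  refine Set.Finite.subset (Finset.range N ×ˢ Finset.range N).finite_toSet ?_
  intro p hp
  simp only [Set.mem_setOf_eq, dist_zero_right, not_lt] at hp
  have hFne : F p ≠ 0 := by
    intro hz
    rw [hz, norm_zero] at hp
    linarith
  have hle : p.2 ≤ p.1 := not_lt.mp (fun hcon => hFne (h0 p hcon))
  have h1 : p.1 < N := by
    by_contra hge
    exact absurd (lt_of_le_of_lt (hp.trans (hb p)) (hN p.1 (not_lt.mp hge))) (lt_irrefl ε)
  simp only [Finset.coe_product, Set.mem_prod, Finset.mem_coe, Finset.mem_range]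
  exact ⟨h1, lt_of_le_of_lt hle h1⟩

/-- The key uniqueness theorem for twisted expansions. -/
theorem tw_unique {d : ℕ → K} {δ ρ : ℝ} (hδρ : δ < ρ) (hd : ∀ k, ‖d k‖ ≤ δ)
    (hcase : Function.Injective d ∨ (Set.range d).Finite)
    {γ : ℕ → K}
    (hsum : ∀ x : K, ‖x‖ < ρ → Summable (fun n => γ n * twP d x n))
    (hzero : ∀ x : K, ‖x‖ < ρ → ∑' n, γ n * twP d x n = 0) :
    ∀ n, γ n = 0 := by
  have hδ0 : 0 ≤ δ := (norm_nonneg _).trans (hd 0)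
  have hρ0 : 0 < ρ := lt_of_le_of_lt hδ0 hδρ
  intro m
  induction m using Nat.strong_induction_on with
  | _ m IH =>
  set D : ℕ → K := fun k => d (m + k) with hD
  have key : ∀ x : K, ‖x‖ < ρ → (∀ k, k < m → x ≠ d k) →
      Summable (fun n => γ (m + n) * twP D x n) ∧ (∑' n, γ (m + n) * twP D x n) = 0 := by
    intro x hx hxd
    have hPm : twP d x m ≠ 0 := by
      rw [twP]
      apply Finset.prod_ne_zero_iff.mpr
      intro k hk
      exact sub_ne_zero_of_ne (hxd k (Finset.mem_range.mp hk))
    have hfac : ∀ n, γ (m + n) * twP d x (m + n)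
        = twP d x m * (γ (m + n) * twP D x n) := by
      intro n; rw [twP_add]; ring
    have hs0 : Summable ((fun n => γ n * twP d x n) ∘ (fun n => m + n)) :=
      (hsum x hx).comp_injective (add_right_injective m)
    have hs1 : Summable (fun n => twP d x m * (γ (m + n) * twP D x n)) := by
      refine hs0.congr ?_
      intro n
      simp only [Function.comp_apply]
      exact hfac n
    have hs2 : Summable (fun n => γ (m + n) * twP D x n) :=
      (summable_mul_left_iff hPm).mp hs1
    refine ⟨hs2, ?_⟩
    have ht : ∑' n, γ (m + n) * twP d x (m + n) = ∑' n, γ n * twP d x n := by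
      refine Function.Injective.tsum_eq (g := fun n : ℕ => m + n)
        (f := fun k => γ k * twP d x k) (add_right_injective m) ?_
      intro k hk
      simp only [Function.mem_support] at hk
      rcases lt_or_ge k m with hkm | hkm
      · exact absurd (by rw [IH k hkm]; ring) hk
      · exact ⟨k - m, by dsimp only; omega⟩
    have hmul : twP d x m * ∑' n, γ (m + n) * twP D x n = 0 := by
      rw [← tsum_mul_left]
      rw [show (fun n => twP d x m * (γ (m + n) * twP D x n))
            = fun n => γ (m + n) * twP d x (m + n) from funext fun n => (hfac n).symm]
      rw [ht, hzero x hx]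
    rcases mul_eq_zero.mp hmul with h | h
    · exact absurd h hPm
    · exact h
  rcases hcase with hinj | hfin
  · -- distinct nodes: evaluate at x = d m
    have hx : ‖d m‖ < ρ := lt_of_le_of_lt (hd m) hδρ
    have hxd : ∀ k, k < m → (d m : K) ≠ d k := by
      intro k hk hcon
      have := hinj hcon
      omega
    obtain ⟨hs, hz⟩ := key (d m) hx hxd
    have hval : ∑' n, γ (m + n) * twP D (d m) n = γ m := by
      rw [tsum_eq_single 0 ?_]
      · simp [twP]
      · intro n hn
        match n, hn with
        | (n + 1), _ =>
          have hzero' : twP D (d m) (n + 1) = 0 := by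
            rw [twP]
            apply Finset.prod_eq_zero (Finset.mem_range.mpr (Nat.succ_pos n))
            simp [hD]
          rw [hzero']
          ring
    rw [hval] at hz
    exact hz
  · -- finite range: limit argument
    classical
    obtain ⟨μ, hμ0, hμ⟩ : ∃ μ : ℝ, 0 < μ ∧ ∀ k, d m ≠ d k → μ ≤ ‖d m - d k‖ := by
      set Fs : Finset K := hfin.toFinset.filter (fun y => y ≠ d m) with hFs
      by_cases hne : Fs.Nonempty
      · set S : Finset ℝ := Fs.image (fun y => ‖d m - y‖) with hS
        have hSne : S.Nonempty := hne.image _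
        refine ⟨S.min' hSne, ?_, ?_⟩
        · obtain ⟨y, hy, hmin⟩ := Finset.mem_image.mp (S.min'_mem hSne)
          rw [← hmin]
          have hyne : y ≠ d m := (Finset.mem_filter.mp hy).2
          rw [norm_pos_iff]
          exact sub_ne_zero_of_ne (Ne.symm hyne)
        · intro k hk
          apply Finset.min'_le
          apply Finset.mem_image.mpr
          refine ⟨d k, ?_, rfl⟩
          apply Finset.mem_filter.mpr
          exact ⟨hfin.mem_toFinset.mpr (Set.mem_range_self k), fun hcon => hk hcon.symm⟩
      · refine ⟨1, one_pos, ?_⟩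
        intro k hk
        exfalso
        exact hne ⟨d k, Finset.mem_filter.mpr
          ⟨hfin.mem_toFinset.mpr (Set.mem_range_self k), fun hcon => hk hcon.symm⟩⟩
    obtain ⟨z, hz0, hz1⟩ := NormedField.exists_norm_lt_one K
    obtain ⟨M₀, hM₀⟩ : ∃ M₀ : ℕ, ‖z‖ ^ M₀ < min μ ρ :=
      exists_pow_lt_of_lt_one (lt_min hμ0 hρ0) hz1
    have hzne : z ≠ 0 := by
      intro h
      rw [h] at hz0
      simp at hz0
    set xs : ℕ → K := fun s => d m + z ^ (M₀ + s) with hxs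
    have hεs : ∀ s, ‖z ^ (M₀ + s)‖ ≤ ‖z‖ ^ M₀ := by
      intro s
      rw [norm_pow]
      exact pow_le_pow_of_le_one (norm_nonneg z) hz1.le (by omega)
    have hεμ : ∀ s, ‖z ^ (M₀ + s)‖ < μ :=
      fun s => lt_of_le_of_lt (hεs s) (lt_of_lt_of_le hM₀ (min_le_left _ _))
    have hxρ : ∀ s, ‖xs s‖ < ρ := by
      intro s
      refine lt_of_le_of_lt (IsUltrametricDist.norm_add_le_max _ _) ?_
      apply max_lt (lt_of_le_of_lt (hd m) hδρ)
      exact lt_of_le_of_lt (hεs s) (lt_of_lt_of_le hM₀ (min_le_right _ _))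
    have hdiff : ∀ s k, d k = d m → xs s - d k = z ^ (M₀ + s) := by
      intro s k hk
      rw [hxs, hk]
      ring
    have hdiff2 : ∀ s k, d k ≠ d m → ‖xs s - d k‖ = ‖d m - d k‖ := by
      intro s k hk
      have hre : xs s - d k = (d m - d k) + z ^ (M₀ + s) := by rw [hxs]; ring
      rw [hre, norm_add_eq_left]
      exact lt_of_lt_of_le (hεμ s) (hμ k (fun hcon => hk hcon.symm))
    have hxdk : ∀ s k, xs s ≠ d k := by
      intro s k
      by_cases hcase2 : d k = d m
      · intro hcon
        have h0 : xs s - d k = 0 := sub_eq_zero.mpr hcon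
        rw [hdiff s k hcase2] at h0
        exact (pow_ne_zero _ hzne) h0
      · intro hcon
        have h0 : ‖xs s - d k‖ = 0 := by rw [hcon, sub_self, norm_zero]
        rw [hdiff2 s k hcase2] at h0
        have := hμ k (fun hcon2 => hcase2 hcon2.symm)
        linarith
    set D' : ℕ → K := fun k => d (m + 1 + k) with hD'
    have hDsh : (fun k => D (k + 1)) = D' := by
      funext k
      simp only [hD, hD']
      congr 1
      omega
    have htail : ∀ s, Summable (fun n => γ (m + 1 + n) * twP D' (xs s) n) ∧
        γ m = -((xs s - d m) * ∑' n, γ (m + 1 + n) * twP D' (xs s) n) := by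
      intro s
      obtain ⟨hs, hz⟩ := key (xs s) (hxρ s) (fun k _ => hxdk s k)
      have hxm : xs s - d m ≠ 0 := sub_ne_zero_of_ne (hxdk s m)
      have hfac : ∀ n, γ (m + (n + 1)) * twP D (xs s) (n + 1)
          = (xs s - d m) * (γ (m + 1 + n) * twP D' (xs s) n) := by
        intro n
        rw [twP_succ' D (xs s) n, hDsh]
        have h1 : D 0 = d m := by simp [hD]
        rw [h1]
        have h2 : m + (n + 1) = m + 1 + n := by omega
        rw [h2]
        ring
      have hsTail : Summable (fun n => γ (m + (n + 1)) * twP D (xs s) (n + 1)) := by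
        exact (summable_nat_add_iff 1).mpr hs
      have hsTail2 : Summable (fun n => (xs s - d m) * (γ (m + 1 + n) * twP D' (xs s) n)) :=
        hsTail.congr (fun n => hfac n)
      have hsT' : Summable (fun n => γ (m + 1 + n) * twP D' (xs s) n) :=
        (summable_mul_left_iff hxm).mp hsTail2
      refine ⟨hsT', ?_⟩
      have h0 : (0 : K) = γ m + ∑' n, γ (m + (n + 1)) * twP D (xs s) (n + 1) := by
        rw [← hz, Summable.tsum_eq_zero_add hs]
        simp [twP]
      have h1 : ∑' n, γ (m + (n + 1)) * twP D (xs s) (n + 1)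
          = (xs s - d m) * ∑' n, γ (m + 1 + n) * twP D' (xs s) n := by
        rw [← tsum_mul_left]
        exact tsum_congr hfac
      rw [h1] at h0
      linear_combination -h0
    -- uniform bound from the reference point xs 0
    obtain ⟨hs0, _⟩ := htail 0
    have hu0 : Tendsto (fun n => ‖γ (m + 1 + n) * twP D' (xs 0) n‖) atTop (𝓝 0) := by
      have := hs0.tendsto_atTop_zero.norm
      simpa using this
    obtain ⟨C, hC⟩ : ∃ C : ℝ, ∀ n, ‖γ (m + 1 + n) * twP D' (xs 0) n‖ ≤ C := by
      obtain ⟨C, hC⟩ := hu0.bddAbove_range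
      exact ⟨C, fun n => hC (Set.mem_range_self n)⟩
    have hCnn : 0 ≤ C := le_trans (norm_nonneg _) (hC 0)
    have hcomp : ∀ s n, ‖γ (m + 1 + n) * twP D' (xs s) n‖
        ≤ ‖γ (m + 1 + n) * twP D' (xs 0) n‖ := by
      intro s n
      rw [norm_mul, norm_mul]
      apply mul_le_mul_of_nonneg_left ?_ (norm_nonneg _)
      rw [twP, twP, norm_prod, norm_prod]
      apply Finset.prod_le_prod (fun _ _ => norm_nonneg _)
      intro k _
      by_cases hcc : D' k = d m
      · have e1 : xs s - D' k = z ^ (M₀ + s) := hdiff s (m + 1 + k) hcc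
        have e2 : xs 0 - D' k = z ^ (M₀ + 0) := hdiff 0 (m + 1 + k) hcc
        rw [e1, e2, norm_pow, norm_pow]
        exact pow_le_pow_of_le_one (norm_nonneg z) hz1.le (by omega)
      · rw [hdiff2 s (m + 1 + k) hcc, hdiff2 0 (m + 1 + k) hcc]
    have hbound : ∀ s, ‖γ m‖ ≤ ‖z‖ ^ (M₀ + s) * C := by
      intro s
      obtain ⟨hsS, hmEq⟩ := htail s
      rw [hmEq, norm_neg, norm_mul]
      have e1 : ‖xs s - d m‖ = ‖z‖ ^ (M₀ + s) := by
        rw [hdiff s m rfl, norm_pow]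
      rw [e1]
      apply mul_le_mul_of_nonneg_left ?_ (by positivity)
      exact IsUltrametricDist.norm_tsum_le_of_forall_le_of_nonneg hCnn
        (fun n => (hcomp s n).trans (hC n))
    have htend : Tendsto (fun s : ℕ => ‖z‖ ^ (M₀ + s) * C) atTop (𝓝 0) := by
      have h1 : Tendsto (fun s : ℕ => (‖z‖ ^ M₀ * C) * ‖z‖ ^ s) atTop (𝓝 0) := by
        simpa using (tendsto_pow_atTop_nhds_zero_of_lt_one (norm_nonneg z) hz1).const_mul
          (‖z‖ ^ M₀ * C)
      refine h1.congr ?_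
      intro s
      rw [pow_add]
      ring
    have hγ : ‖γ m‖ ≤ 0 := ge_of_tendsto' htend hbound
    exact norm_le_zero_iff.mp hγ


theorem main_ineq_a {d : ℕ → K} {δ ρ M : ℝ} (hδρ : δ < ρ) (hd : ∀ k, ‖d k‖ ≤ δ)
    {a b : ℕ → K}
    (hM : ∀ n, ‖b n‖ * ρ ^ n ≤ M)
    (hasum : ∀ x : K, ‖x‖ < ρ → Summable (fun j => a j * x ^ j))
    (heq : ∀ x : K, ‖x‖ < ρ → ∑' j, a j * x ^ j = ∑' n, b n * twP d x n) :
    ∀ j, ‖a j‖ * ρ ^ j ≤ M := by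
  classical
  have hδ0 : 0 ≤ δ := (norm_nonneg _).trans (hd 0)
  have hρ0 : 0 < ρ := lt_of_le_of_lt hδ0 hδρ
  have hM0 : 0 ≤ M := le_trans (by positivity) (hM 0)
  have hbn : ∀ n, ‖b n‖ ≤ M / ρ ^ n := by
    intro n
    rw [le_div_iff₀ (pow_pos hρ0 n)]
    exact hM n
  have hδρ1 : δ / ρ < 1 := (div_lt_one hρ0).mpr hδρ
  have hδρ0 : 0 ≤ δ / ρ := by positivity
  set bE : ℕ → ℕ → K := fun n j => if j ≤ n then b n * Ec d n j else 0 with hbE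
  have hbEnorm : ∀ n j, ‖bE n j‖ ≤ (M / ρ ^ j) * (δ / ρ) ^ (n - j) := by
    intro n j
    by_cases hjn : j ≤ n
    · simp only [hbE, if_pos hjn, norm_mul]
      have h1 : ‖b n‖ * ‖Ec d n j‖ ≤ (M / ρ ^ n) * δ ^ (n - j) :=
        mul_le_mul (hbn n) (norm_Ec_le hd n j) (norm_nonneg _) (by positivity)
      refine h1.trans (le_of_eq ?_)
      have h2 : ρ ^ n = ρ ^ j * ρ ^ (n - j) := by
        rw [← pow_add]
        congr 1
        omega
      rw [h2, div_pow]
      field_simp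
    · simp only [hbE, if_neg hjn, norm_zero]
      positivity
  have hAs : ∀ j, Summable (fun n => bE n j) := fun j =>
    summable_of_norm_le_aux (fun n => hbEnorm n j) (tendsto_geom_shift_aux (M / ρ ^ j) j hδρ0 hδρ1)
  set A : ℕ → K := fun j => ∑' n, bE n j with hA
  have hAbound : ∀ j, ‖A j‖ ≤ M / ρ ^ j := by
    intro j
    apply IsUltrametricDist.norm_tsum_le_of_forall_le_of_nonneg (by positivity)
    intro n
    refine (hbEnorm n j).trans ?_
    have h3 : (δ / ρ) ^ (n - j) ≤ 1 := pow_le_one₀ hδρ0 hδρ1.le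
    calc (M / ρ ^ j) * (δ / ρ) ^ (n - j) ≤ (M / ρ ^ j) * 1 :=
          mul_le_mul_of_nonneg_left h3 (by positivity)
      _ = M / ρ ^ j := mul_one _
  have hfub : ∀ x : K, ‖x‖ < ρ → Summable (fun j => A j * x ^ j)
      ∧ ∑' j, A j * x ^ j = ∑' n, b n * twP d x n := by
    intro x hx
    set θ : ℝ := max ‖x‖ δ / ρ with hθ
    have hθ1 : θ < 1 := (div_lt_one hρ0).mpr (max_lt hx hδρ)
    have hθ0 : 0 ≤ θ := by positivity
    have hmx0 : 0 ≤ max ‖x‖ δ := le_max_of_le_right hδ0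
    set F : ℕ × ℕ → K := fun p => bE p.1 p.2 * x ^ p.2 with hF
    have hFnorm : ∀ p : ℕ × ℕ, ‖F p‖ ≤ M * θ ^ p.1 := by
      rintro ⟨n, j⟩
      by_cases hjn : j ≤ n
      · simp only [hF, hbE, if_pos hjn, norm_mul, norm_pow]
        have h1 : ‖b n‖ * ‖Ec d n j‖ * ‖x‖ ^ j
            ≤ (M / ρ ^ n) * δ ^ (n - j) * (max ‖x‖ δ) ^ j := by
          apply mul_le_mul
            (mul_le_mul (hbn n) (norm_Ec_le hd n j) (norm_nonneg _) (by positivity))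
            (pow_le_pow_left₀ (norm_nonneg x) (le_max_left _ _) j)
            (by positivity) (by positivity)
        refine h1.trans ?_
        have h2 : δ ^ (n - j) * (max ‖x‖ δ) ^ j ≤ (max ‖x‖ δ) ^ n := by
          calc δ ^ (n - j) * (max ‖x‖ δ) ^ j ≤ (max ‖x‖ δ) ^ (n - j) * (max ‖x‖ δ) ^ j :=
                mul_le_mul_of_nonneg_right (pow_le_pow_left₀ hδ0 (le_max_right _ _) _)
                  (by positivity)
            _ = (max ‖x‖ δ) ^ n := by
                rw [← pow_add]
                congr 1
                omega
        calc (M / ρ ^ n) * δ ^ (n - j) * (max ‖x‖ δ) ^ j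
            = (M / ρ ^ n) * (δ ^ (n - j) * (max ‖x‖ δ) ^ j) := by ring
          _ ≤ (M / ρ ^ n) * (max ‖x‖ δ) ^ n := mul_le_mul_of_nonneg_left h2 (by positivity)
          _ = M * θ ^ n := by
              rw [hθ, div_pow]
              field_simp
      · simp only [hF, hbE, if_neg hjn, zero_mul, norm_zero]
        positivity
    have hFzero : ∀ p : ℕ × ℕ, p.1 < p.2 → F p = 0 := by
      rintro ⟨n, j⟩ hnj
      simp only [hF, hbE, if_neg (by omega : ¬ j ≤ n), zero_mul]
    have hFs : Summable F := summable_pair hθ0 hθ1 hFzero hFnorm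
    have hinner1 : ∀ n, ∑' j, F (n, j) = b n * twP d x n := by
      intro n
      rw [tsum_eq_sum (s := Finset.range (n+1))
        (by
          intro j hj
          have : ¬ j ≤ n := by
            simp only [Finset.mem_range] at hj
            omega
          simp only [hF, hbE, if_neg this, zero_mul])]
      rw [twP_eq_sum_Ec d x n, Finset.mul_sum]
      apply Finset.sum_congr rfl
      intro j hj
      have : j ≤ n := by
        simp only [Finset.mem_range] at hj
        omega
      simp only [hF, hbE, if_pos this]
      ring
    have hinner2 : ∀ j, ∑' n, F (n, j) = A j * x ^ j := by
      intro j
      simp only [hA, hF]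
      rw [tsum_mul_right]
    have h1 : ∀ n, Summable fun j => F (n, j) := fun n => hFs.prod_factor n
    have h2 : ∀ j, Summable fun n => F (n, j) := fun j => hFs.prod_symm.prod_factor j
    have hswap : ∑' j, ∑' n, F (n, j) = ∑' n, ∑' j, F (n, j) :=
      Summable.tsum_comm' hFs h1 h2
    constructor
    · apply summable_of_norm_le_aux (u := fun j => M * (‖x‖/ρ) ^ j) ?_
        (tendsto_geom_aux M (by positivity) ((div_lt_one hρ0).mpr hx))
      intro j
      rw [norm_mul, norm_pow]
      calc ‖A j‖ * ‖x‖ ^ j ≤ (M / ρ ^ j) * ‖x‖ ^ j :=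
            mul_le_mul_of_nonneg_right (hAbound j) (by positivity)
        _ = M * (‖x‖/ρ) ^ j := by
            rw [div_pow]
            field_simp
    · calc ∑' j, A j * x ^ j = ∑' j, ∑' n, F (n, j) := tsum_congr (fun j => (hinner2 j).symm)
        _ = ∑' n, ∑' j, F (n, j) := hswap
        _ = ∑' n, b n * twP d x n := tsum_congr hinner1
  set γ : ℕ → K := fun j => a j - A j with hγ
  have hγs : ∀ x : K, ‖x‖ < ρ → Summable (fun j => γ j * x ^ j) := by
    intro x hx
    refine ((hasum x hx).sub (hfub x hx).1).congr ?_
    intro j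
    simp only [hγ]
    ring
  have hγz : ∀ x : K, ‖x‖ < ρ → ∑' j, γ j * x ^ j = 0 := by
    intro x hx
    have h1 : ∑' j, γ j * x ^ j = (∑' j, a j * x ^ j) - ∑' j, A j * x ^ j := by
      rw [← Summable.tsum_sub (hasum x hx) (hfub x hx).1]
      apply tsum_congr
      intro j
      simp only [hγ]
      ring
    rw [h1, heq x hx, (hfub x hx).2]
    ring
  have hzero : ∀ j, γ j = 0 := by
    apply tw_unique (d := fun _ => (0:K)) (δ := 0) hρ0 (fun k => by simp)
      (Or.inr (by
        rw [Set.range_const]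
        exact Set.finite_singleton 0))
    · intro x hx
      refine (hγs x hx).congr ?_
      intro j
      rw [twP_const_zero]
    · intro x hx
      rw [show (fun j => γ j * twP (fun _ => (0:K)) x j) = fun j => γ j * x ^ j from
        funext fun j => by rw [twP_const_zero]]
      exact hγz x hx
  intro j
  have haj : a j = A j := by
    have := hzero j
    simp only [hγ] at this
    linear_combination this
  rw [haj]
  calc ‖A j‖ * ρ ^ j ≤ (M / ρ ^ j) * ρ ^ j :=
        mul_le_mul_of_nonneg_right (hAbound j) (by positivity)
    _ = M := by field_simp

theorem main_ineq_b {d : ℕ → K} {δ ρ M : ℝ} (hδρ : δ < ρ) (hd : ∀ k, ‖d k‖ ≤ δ)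
    (hcase : Function.Injective d ∨ (Set.range d).Finite)
    {a b : ℕ → K}
    (hM : ∀ j, ‖a j‖ * ρ ^ j ≤ M)
    (hbsum : ∀ x : K, ‖x‖ < ρ → Summable (fun n => b n * twP d x n))
    (heq : ∀ x : K, ‖x‖ < ρ → ∑' j, a j * x ^ j = ∑' n, b n * twP d x n) :
    ∀ n, ‖b n‖ * ρ ^ n ≤ M := by
  classical
  have hδ0 : 0 ≤ δ := (norm_nonneg _).trans (hd 0)
  have hρ0 : 0 < ρ := lt_of_le_of_lt hδ0 hδρ
  have hM0 : 0 ≤ M := le_trans (by positivity) (hM 0)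
  have han : ∀ j, ‖a j‖ ≤ M / ρ ^ j := by
    intro j
    rw [le_div_iff₀ (pow_pos hρ0 j)]
    exact hM j
  have hδρ1 : δ / ρ < 1 := (div_lt_one hρ0).mpr hδρ
  have hδρ0 : 0 ≤ δ / ρ := by positivity
  set aN : ℕ → ℕ → K := fun j n => if n ≤ j then a j * Nc d j n else 0 with haN
  have haNnorm : ∀ j n, ‖aN j n‖ ≤ (M / ρ ^ n) * (δ / ρ) ^ (j - n) := by
    intro j n
    by_cases hnj : n ≤ j
    · simp only [haN, if_pos hnj, norm_mul]
      have h1 : ‖a j‖ * ‖Nc d j n‖ ≤ (M / ρ ^ j) * δ ^ (j - n) :=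
        mul_le_mul (han j) (norm_Nc_le hd j n) (norm_nonneg _) (by positivity)
      refine h1.trans (le_of_eq ?_)
      have h2 : ρ ^ j = ρ ^ n * ρ ^ (j - n) := by
        rw [← pow_add]
        congr 1
        omega
      rw [h2, div_pow]
      field_simp
    · simp only [haN, if_neg hnj, norm_zero]
      positivity
  have hBs : ∀ n, Summable (fun j => aN j n) := fun n =>
    summable_of_norm_le_aux (fun j => haNnorm j n) (tendsto_geom_shift_aux (M / ρ ^ n) n hδρ0 hδρ1)
  set B : ℕ → K := fun n => ∑' j, aN j n with hB
  have hBbound : ∀ n, ‖B n‖ ≤ M / ρ ^ n := by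
    intro n
    apply IsUltrametricDist.norm_tsum_le_of_forall_le_of_nonneg (by positivity)
    intro j
    refine (haNnorm j n).trans ?_
    have h3 : (δ / ρ) ^ (j - n) ≤ 1 := pow_le_one₀ hδρ0 hδρ1.le
    calc (M / ρ ^ n) * (δ / ρ) ^ (j - n) ≤ (M / ρ ^ n) * 1 :=
          mul_le_mul_of_nonneg_left h3 (by positivity)
      _ = M / ρ ^ n := mul_one _
  have hfub : ∀ x : K, ‖x‖ < ρ → Summable (fun n => B n * twP d x n)
      ∧ ∑' n, B n * twP d x n = ∑' j, a j * x ^ j := by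
    intro x hx
    set θ : ℝ := max ‖x‖ δ / ρ with hθ
    have hθ1 : θ < 1 := (div_lt_one hρ0).mpr (max_lt hx hδρ)
    have hθ0 : 0 ≤ θ := by positivity
    have hmx0 : 0 ≤ max ‖x‖ δ := le_max_of_le_right hδ0
    have htw : ∀ n, ‖twP d x n‖ ≤ (max ‖x‖ δ) ^ n := fun n => norm_twP_le hd x n
    set F : ℕ × ℕ → K := fun p => aN p.1 p.2 * twP d x p.2 with hF
    have hFnorm : ∀ p : ℕ × ℕ, ‖F p‖ ≤ M * θ ^ p.1 := by
      rintro ⟨j, n⟩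
      by_cases hnj : n ≤ j
      · simp only [hF, haN, if_pos hnj, norm_mul]
        have h1 : ‖a j‖ * ‖Nc d j n‖ * ‖twP d x n‖
            ≤ (M / ρ ^ j) * δ ^ (j - n) * (max ‖x‖ δ) ^ n := by
          apply mul_le_mul
            (mul_le_mul (han j) (norm_Nc_le hd j n) (norm_nonneg _) (by positivity))
            (htw n) (norm_nonneg _) (by positivity)
        refine h1.trans ?_
        have h2 : δ ^ (j - n) * (max ‖x‖ δ) ^ n ≤ (max ‖x‖ δ) ^ j := by
          calc δ ^ (j - n) * (max ‖x‖ δ) ^ n ≤ (max ‖x‖ δ) ^ (j - n) * (max ‖x‖ δ) ^ n :=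
                mul_le_mul_of_nonneg_right (pow_le_pow_left₀ hδ0 (le_max_right _ _) _)
                  (by positivity)
            _ = (max ‖x‖ δ) ^ j := by
                rw [← pow_add]
                congr 1
                omega
        calc (M / ρ ^ j) * δ ^ (j - n) * (max ‖x‖ δ) ^ n
            = (M / ρ ^ j) * (δ ^ (j - n) * (max ‖x‖ δ) ^ n) := by ring
          _ ≤ (M / ρ ^ j) * (max ‖x‖ δ) ^ j := mul_le_mul_of_nonneg_left h2 (by positivity)
          _ = M * θ ^ j := by
              rw [hθ, div_pow]
              field_simp
      · simp only [hF, haN, if_neg hnj, zero_mul, norm_zero]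
        positivity
    have hFzero : ∀ p : ℕ × ℕ, p.1 < p.2 → F p = 0 := by
      rintro ⟨j, n⟩ hjn
      simp only [hF, haN, if_neg (by omega : ¬ n ≤ j), zero_mul]
    have hFs : Summable F := summable_pair hθ0 hθ1 hFzero hFnorm
    have hinner1 : ∀ j, ∑' n, F (j, n) = a j * x ^ j := by
      intro j
      rw [tsum_eq_sum (s := Finset.range (j+1))
        (by
          intro n hn
          have : ¬ n ≤ j := by
            simp only [Finset.mem_range] at hn
            omega
          simp only [hF, haN, if_neg this, zero_mul])]
      rw [pow_eq_sum_Nc d x j, Finset.mul_sum]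
      apply Finset.sum_congr rfl
      intro n hn
      have : n ≤ j := by
        simp only [Finset.mem_range] at hn
        omega
      simp only [hF, haN, if_pos this]
      ring
    have hinner2 : ∀ n, ∑' j, F (j, n) = B n * twP d x n := by
      intro n
      simp only [hB, hF]
      rw [tsum_mul_right]
    have h1 : ∀ j, Summable fun n => F (j, n) := fun j => hFs.prod_factor j
    have h2 : ∀ n, Summable fun j => F (j, n) := fun n => hFs.prod_symm.prod_factor n
    have hswap : ∑' n, ∑' j, F (j, n) = ∑' j, ∑' n, F (j, n) :=
      Summable.tsum_comm' hFs h1 h2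
    constructor
    · apply summable_of_norm_le_aux (u := fun n => M * θ ^ n) ?_ (tendsto_geom_aux M hθ0 hθ1)
      intro n
      rw [norm_mul]
      calc ‖B n‖ * ‖twP d x n‖ ≤ (M / ρ ^ n) * (max ‖x‖ δ) ^ n :=
            mul_le_mul (hBbound n) (htw n) (norm_nonneg _) (by positivity)
        _ = M * θ ^ n := by
            rw [hθ, div_pow]
            field_simp
    · calc ∑' n, B n * twP d x n = ∑' n, ∑' j, F (j, n) := tsum_congr (fun n => (hinner2 n).symm)
        _ = ∑' j, ∑' n, F (j, n) := hswap
        _ = ∑' j, a j * x ^ j := tsum_congr hinner1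
  set γ : ℕ → K := fun n => b n - B n with hγ
  have hγs : ∀ x : K, ‖x‖ < ρ → Summable (fun n => γ n * twP d x n) := by
    intro x hx
    refine ((hbsum x hx).sub (hfub x hx).1).congr ?_
    intro n
    simp only [hγ]
    ring
  have hγz : ∀ x : K, ‖x‖ < ρ → ∑' n, γ n * twP d x n = 0 := by
    intro x hx
    have h1 : ∑' n, γ n * twP d x n = (∑' n, b n * twP d x n) - ∑' n, B n * twP d x n := by
      rw [← Summable.tsum_sub (hbsum x hx) (hfub x hx).1]
      apply tsum_congr
      intro n
      simp only [hγ]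
      ring
    rw [h1, (hfub x hx).2, ← heq x hx]
    ring
  have hzero : ∀ n, γ n = 0 := tw_unique hδρ hd hcase hγs hγz
  intro n
  have hbn : b n = B n := by
    have := hzero n
    simp only [hγ] at this
    linear_combination this
  rw [hbn]
  calc ‖B n‖ * ρ ^ n ≤ (M / ρ ^ n) * ρ ^ n :=
        mul_le_mul_of_nonneg_right (hBbound n) (by positivity)
    _ = M := by field_simp

end Aux



/-- Gauss norms agree in the standard and twisted bases: with `σ(x) = qx + h`,
`|q - 1| < 1`, `|(q-1)c + h| < ρ < R`, if
`f(T) = ∑ a_n (T-c)^n = ∑ b_n (T-c)_{q,h}^{[n]}` on the open disc `|T - c| < R`,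
where `(T-c)_{q,h}^{[n]} = ∏_{k<n} (T - σ^k(c))`, then
`sup_n |a_n| ρ^n = sup_n |b_n| ρ^n`. -/
theorem stmt13 {K : Type*} [NontriviallyNormedField K] [IsUltrametricDist K]
    [CompleteSpace K] [CharZero K]
    (q h c : K) (hq : ‖q - 1‖ < 1) (ρ R : ℝ) (hρ0 : 0 < ρ) (hρR : ρ < R)
    (hstab : ‖(q - 1) * c + h‖ < ρ)
    (a b : ℕ → K)
    (hconv : ∀ t : K, ‖t - c‖ < R → Summable (fun n : ℕ => a n * (t - c) ^ n))
    (hconv' : ∀ t : K, ‖t - c‖ < R →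
      Summable (fun n : ℕ => b n * ∏ k ∈ Finset.range n, (t - (fun x : K => q * x + h)^[k] c)))
    (heq : ∀ t : K, ‖t - c‖ < R →
      (∑' n : ℕ, a n * (t - c) ^ n)
        = ∑' n : ℕ, b n * ∏ k ∈ Finset.range n, (t - (fun x : K => q * x + h)^[k] c)) :
    (⨆ n : ℕ, ‖a n‖ * ρ ^ n) = ⨆ n : ℕ, ‖b n‖ * ρ ^ n := by
  classical
  set w : K := (q - 1) * c + h with hw
  set δ : ℝ := ‖w‖ with hδ
  have hδρ : δ < ρ := hstab
  set d : ℕ → K := fun k => (fun x : K => q * x + h)^[k] c - c with hdd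
  have hq1 : ‖q‖ ≤ 1 := by
    have : q = 1 + (q - 1) := by ring
    rw [this]
    exact (IsUltrametricDist.norm_add_le_max 1 (q - 1)).trans
      (max_le (by simp) hq.le)
  have hqne : q ≠ 0 := by
    intro hq0
    rw [hq0] at hq
    simp at hq
  have hd0 : d 0 = 0 := by simp [hdd]
  have hdsucc : ∀ k, d (k + 1) = q * d k + w := by
    intro k
    simp only [hdd, hw]
    rw [Function.iterate_succ_apply']
    ring
  have hd : ∀ k, ‖d k‖ ≤ δ := by
    intro k
    induction k with
    | zero =>
      rw [hd0, norm_zero]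
      exact norm_nonneg w
    | succ k ih =>
      rw [hdsucc k]
      refine (IsUltrametricDist.norm_add_le_max _ _).trans (max_le ?_ le_rfl)
      rw [norm_mul]
      calc ‖q‖ * ‖d k‖ ≤ 1 * δ := mul_le_mul hq1 ih (norm_nonneg _) zero_le_one
        _ = δ := one_mul δ
  -- case dichotomy
  set sg : ℕ → K := fun k => ∑ i ∈ Finset.range k, q ^ i with hsg
  have hds : ∀ k, d k = sg k * w := by
    intro k
    induction k with
    | zero => simp [hd0, hsg]
    | succ k ih =>
      rw [hdsucc k, ih, hsg]
      simp only
      rw [geom_sum_succ]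
      ring
  have hsgadd : ∀ i j, sg (i + j) = sg i + q ^ i * sg j := by
    intro i j
    simp only [hsg]
    rw [Finset.sum_range_add, Finset.mul_sum]
    congr 1
    apply Finset.sum_congr rfl
    intro k _
    rw [pow_add]
  have hcase : Function.Injective d ∨ (Set.range d).Finite := by
    by_cases hinj : Function.Injective d
    · exact Or.inl hinj
    · right
      obtain ⟨i, j, hdij, hne⟩ := Function.not_injective_iff.mp hinj
      by_cases hwz : w = 0
      · apply Set.Finite.subset (Set.finite_singleton (0 : K))
        intro y hy
        obtain ⟨k, rfl⟩ := hy
        rw [hds k, hwz]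
        simp
      · -- periodic case
        have hsij : sg i = sg j := by
          have h1 : (sg i - sg j) * w = 0 := by
            rw [sub_mul, ← hds i, ← hds j, hdij]
            ring
          rcases mul_eq_zero.mp h1 with h2 | h2
          · linear_combination h2
          · exact absurd h2 hwz
        -- wlog i < j
        obtain ⟨i, j, hij, hsij⟩ : ∃ i j : ℕ, i < j ∧ sg i = sg j := by
          rcases lt_or_gt_of_ne hne with hlt | hlt
          · exact ⟨i, j, hlt, hsij⟩
          · exact ⟨j, i, hlt, hsij.symm⟩
        set r : ℕ := j - i with hr
        have hr0 : 0 < r := by omega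
        have hsr : sg r = 0 := by
          have h1 : sg j = sg i + q ^ i * sg r := by
            rw [show j = i + r by omega] at hsij ⊢
            exact hsgadd i r
          rw [h1] at hsij
          have h2 : q ^ i * sg r = 0 := by linear_combination -hsij
          rcases mul_eq_zero.mp h2 with h3 | h3
          · exact absurd h3 (pow_ne_zero i hqne)
          · exact h3
        have hper : ∀ k, sg (k + r) = sg k := by
          intro k
          rw [hsgadd k r, hsr]
          ring
        have hdper : ∀ k, d (k + r) = d k := by
          intro k
          rw [hds, hds, hper]
        have hmod : ∀ k, d k = d (k % r) := by
          intro k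
          induction k using Nat.strong_induction_on with
          | _ k IH =>
          rcases lt_or_ge k r with hk | hk
          · rw [Nat.mod_eq_of_lt hk]
          · calc d k = d ((k - r) + r) := by congr 1; omega
              _ = d (k - r) := hdper _
              _ = d ((k - r) % r) := IH (k - r) (by omega)
              _ = d (k % r) := by congr 1; exact (Nat.mod_eq_sub_mod hk).symm
        apply Set.Finite.subset ((Finset.range r).image d).finite_toSet
        intro y hy
        obtain ⟨k, rfl⟩ := hy
        simp only [Finset.coe_image, Set.mem_image, Finset.mem_coe, Finset.mem_range]
        exact ⟨k % r, Nat.mod_lt k hr0, (hmod k).symm⟩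
  -- translate the hypotheses
  have hprod : ∀ (x : K) (n : ℕ),
      (∏ k ∈ Finset.range n, (c + x - (fun y : K => q * y + h)^[k] c)) = twP d x n := by
    intro x n
    rw [twP]
    apply Finset.prod_congr rfl
    intro k _
    simp only [hdd]
    ring
  have hasum : ∀ x : K, ‖x‖ < ρ → Summable (fun j => a j * x ^ j) := by
    intro x hx
    have h1 := hconv (c + x) (by rw [add_sub_cancel_left]; exact hx.trans hρR)
    rw [add_sub_cancel_left] at h1
    exact h1
  have hbsum : ∀ x : K, ‖x‖ < ρ → Summable (fun n => b n * twP d x n) := by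
    intro x hx
    have h1 := hconv' (c + x) (by rw [add_sub_cancel_left]; exact hx.trans hρR)
    refine h1.congr ?_
    intro n
    rw [hprod x n]
  have heqx : ∀ x : K, ‖x‖ < ρ → ∑' j, a j * x ^ j = ∑' n, b n * twP d x n := by
    intro x hx
    have h1 := heq (c + x) (by rw [add_sub_cancel_left]; exact hx.trans hρR)
    rw [add_sub_cancel_left] at h1
    rw [h1]
    apply tsum_congr
    intro n
    rw [hprod x n]
  -- final case analysis
  by_cases hBb : BddAbove (Set.range fun n : ℕ => ‖b n‖ * ρ ^ n)
  · have hMb : ∀ n, ‖b n‖ * ρ ^ n ≤ ⨆ n : ℕ, ‖b n‖ * ρ ^ n := fun n => le_ciSup hBb n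
    have hP1 : ∀ j, ‖a j‖ * ρ ^ j ≤ ⨆ n : ℕ, ‖b n‖ * ρ ^ n :=
      main_ineq_a hδρ hd hMb hasum heqx
    have hBa : BddAbove (Set.range fun j : ℕ => ‖a j‖ * ρ ^ j) :=
      ⟨⨆ n : ℕ, ‖b n‖ * ρ ^ n, by
        rintro y ⟨j, rfl⟩
        exact hP1 j⟩
    have hMa : ∀ j, ‖a j‖ * ρ ^ j ≤ ⨆ j : ℕ, ‖a j‖ * ρ ^ j := fun j => le_ciSup hBa j
    have hP2 : ∀ n, ‖b n‖ * ρ ^ n ≤ ⨆ j : ℕ, ‖a j‖ * ρ ^ j :=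
      main_ineq_b hδρ hd hcase hMa hbsum heqx
    exact le_antisymm (ciSup_le hP1) (ciSup_le hP2)
  · have hBa : ¬ BddAbove (Set.range fun j : ℕ => ‖a j‖ * ρ ^ j) := by
      intro hBa
      apply hBb
      have hMa : ∀ j, ‖a j‖ * ρ ^ j ≤ ⨆ j : ℕ, ‖a j‖ * ρ ^ j := fun j => le_ciSup hBa j
      have hP2 : ∀ n, ‖b n‖ * ρ ^ n ≤ ⨆ j : ℕ, ‖a j‖ * ρ ^ j :=
        main_ineq_b hδρ hd hcase hMa hbsum heqx
      exact ⟨⨆ j : ℕ, ‖a j‖ * ρ ^ j, by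
        rintro y ⟨n, rfl⟩
        exact hP2 n⟩
    rw [Real.iSup_of_not_bddAbove hBa, Real.iSup_of_not_bddAbove hBb]
end

section
/- Let p ≠ 2 be prime and k ≥ 1. Then p^{-k} · ∑_{1 ≤ i ≤ p^k - 1, gcd(i,p)=1} i^{-1} ∈ ℤ_p and the sequence (p^{-k} · ∑_{1 ≤ i ≤ p^k - 1, gcd(i,p)=1} i^{-1})_k converges to 0 in ℚ_p as k → ∞. -/
open Finset

section main
variable {p : ℕ} [Fact p.Prime]

lemma norm_nat_coprime {i : ℕ} (h : ¬ p ∣ i) : ‖(i : ℚ_[p])‖ = 1 := by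
  have h1 : ‖((i : ℤ) : ℚ_[p])‖ ≤ 1 := Padic.norm_int_le_one _
  have h2 : ¬ ‖((i : ℤ) : ℚ_[p])‖ < 1 := by
    rw [Padic.norm_intCast_lt_one_iff]
    exact_mod_cast h
  push_cast at h1 h2
  exact le_antisymm h1 (not_lt.mp h2)

lemma norm_sub_le_pow {a b : ℤ} {k : ℕ} (h : ((p ^ k : ℕ) : ℤ) ∣ (a - b)) :
    ‖(a : ℚ_[p]) - (b : ℚ_[p])‖ ≤ (p : ℝ) ^ (-(k : ℤ)) := by
  have := (Padic.norm_int_le_pow_iff_dvd (a - b) k).2 (by exact_mod_cast h)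
  push_cast at this
  exact this

lemma sum_filter_eq_sum_units {k : ℕ} (hk : 1 ≤ k) (f : ℕ → ℚ_[p]) :
    ∑ i ∈ (Finset.range (p ^ k)).filter (fun i => Nat.Coprime i p), f i =
      ∑ u : (ZMod (p ^ k))ˣ, f ((u : ZMod (p ^ k)).val) := by
  haveI : NeZero (p ^ k) := ⟨pow_ne_zero _ (Fact.out : p.Prime).pos.ne'⟩
  refine Finset.sum_bij' (fun i hi => ZMod.unitOfCoprime i
      ((Finset.mem_filter.mp hi).2.pow_right k))
    (fun u _ => (u : ZMod (p ^ k)).val) ?_ ?_ ?_ ?_ ?_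
  · intro a ha; exact Finset.mem_univ _
  · intro u _
    refine Finset.mem_filter.mpr ⟨Finset.mem_range.mpr (ZMod.val_lt _), ?_⟩
    have := ZMod.val_coe_unit_coprime u
    exact (Nat.coprime_pow_right_iff hk _ _).mp this
  · intro a ha
    simp [ZMod.coe_unitOfCoprime, ZMod.val_cast_of_lt (Finset.mem_range.mp (Finset.mem_filter.mp ha).1)]
  · intro u _
    ext
    simp [ZMod.coe_unitOfCoprime, ZMod.natCast_val, ZMod.cast_id]
  · intro a ha
    simp [ZMod.coe_unitOfCoprime, ZMod.val_cast_of_lt (Finset.mem_range.mp (Finset.mem_filter.mp ha).1)]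

lemma key (hp : p ≠ 2) {k : ℕ} (hk : 1 ≤ k) :
    ‖(p : ℚ_[p]) ^ (-(k : ℤ)) *
        ∑ i ∈ (Finset.range (p ^ k)).filter (fun i => Nat.Coprime i p),
          ((i : ℚ_[p]))⁻¹‖ ≤ (p : ℝ) ^ ((1 : ℤ) - k) := by
  have hpp : p.Prime := Fact.out
  haveI : NeZero (p ^ k) := ⟨pow_ne_zero _ hpp.pos.ne'⟩
  have hN1 : 1 < p ^ k := Nat.one_lt_pow (by omega) hpp.one_lt
  haveI : Fact (1 < p ^ k) := ⟨hN1⟩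
  rw [sum_filter_eq_sum_units hk]
  set N : ℕ := p ^ k with hN
  set x : (ZMod N)ˣ → ℚ_[p] := fun u => (((u : ZMod N).val : ℕ) : ℚ_[p]) with hx
  -- basic facts
  have hcop : ∀ u : (ZMod N)ˣ, ¬ p ∣ (u : ZMod N).val := by
    intro u hdvd
    have h := ZMod.val_coe_unit_coprime u
    have hpN : p ∣ N := dvd_pow_self p (by omega)
    have hd1 : p ∣ 1 := h ▸ Nat.dvd_gcd hdvd hpN
    exact hpp.one_lt.ne' (Nat.dvd_one.mp hd1)
  have hnx : ∀ u, ‖x u‖ = 1 := fun u => norm_nat_coprime (hcop u)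
  have hx0 : ∀ u, x u ≠ 0 := by
    intro u h
    have := hnx u
    rw [h, norm_zero] at this
    norm_num at this
  have hnegval : ∀ u : (ZMod N)ˣ, ((-u : (ZMod N)ˣ) : ZMod N).val = N - (u : ZMod N).val := by
    intro u
    haveI : NeZero ((u : ZMod N)) := ⟨u.ne_zero⟩
    rw [Units.val_neg, ZMod.val_neg_of_ne_zero]
  have hxneg : ∀ u : (ZMod N)ˣ, x (-u) = (N : ℚ_[p]) - x u := by
    intro u
    show ((((-u : (ZMod N)ˣ) : ZMod N).val : ℕ) : ℚ_[p]) = _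
    rw [hnegval u, Nat.cast_sub (le_of_lt (ZMod.val_lt _))]
  -- the sum S
  set S := ∑ u : (ZMod N)ˣ, (x u)⁻¹ with hS
  have hSneg : S = ∑ u : (ZMod N)ˣ, (x (-u))⁻¹ :=
    (Fintype.sum_equiv (Equiv.neg _) (fun u => (x (-u))⁻¹) (fun u => (x u)⁻¹)
      (fun u => rfl)).symm
  -- pairing identity
  have hpair : (2 : ℚ_[p]) * S =
      (N : ℚ_[p]) * ∑ u : (ZMod N)ˣ, (x u * ((N : ℚ_[p]) - x u))⁻¹ := by
    have h1 : (2 : ℚ_[p]) * S = ∑ u : (ZMod N)ˣ, ((x u)⁻¹ + (x (-u))⁻¹) := by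
      rw [Finset.sum_add_distrib, ← hSneg]; ring
    rw [h1, Finset.mul_sum]
    refine Finset.sum_congr rfl fun u _ => ?_
    rw [hxneg u]
    have h1 : x u ≠ 0 := hx0 u
    have h2 : (N : ℚ_[p]) - x u ≠ 0 := by rw [← hxneg u]; exact hx0 _
    field_simp
    ring
  set P := ∑ u : (ZMod N)ˣ, (x u * ((N : ℚ_[p]) - x u))⁻¹ with hP
  set Q := ∑ u : (ZMod N)ˣ, ((x u) ^ 2)⁻¹ with hQ
  have hnormN : ‖(N : ℚ_[p])‖ = (p : ℝ) ^ (-(k : ℤ)) := by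
    rw [hN]
    push_cast
    exact Padic.norm_p_pow k
  -- P + Q small
  have hPQ : ‖P + Q‖ ≤ (p : ℝ) ^ (-(k : ℤ)) := by
    rw [hP, hQ, ← Finset.sum_add_distrib]
    refine IsUltrametricDist.norm_sum_le_of_forall_le_of_nonneg (by positivity) ?_
    intro u _
    have h1 : x u ≠ 0 := hx0 u
    have h2 : (N : ℚ_[p]) - x u ≠ 0 := by rw [← hxneg u]; exact hx0 _
    have e : (x u * ((N : ℚ_[p]) - x u))⁻¹ + ((x u) ^ 2)⁻¹ =
        (N : ℚ_[p]) * ((x u) ^ 2 * ((N : ℚ_[p]) - x u))⁻¹ := by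
      field_simp
      ring
    rw [e, norm_mul, hnormN, norm_inv, norm_mul, norm_pow, hnx u, ← hxneg u, hnx]
    norm_num
  -- the 2-trick for Q
  have h2p : ¬ p ∣ 2 := fun h => hp ((Nat.prime_dvd_prime_iff_eq hpp Nat.prime_two).mp h)
  have hn2 : ‖(2 : ℚ_[p])‖ = 1 := by
    have := norm_nat_coprime (p := p) h2p
    push_cast at this
    exact this
  have h2N : Nat.Coprime 2 N :=
    ((Nat.coprime_primes Nat.prime_two hpp).mpr (Ne.symm hp)).pow_right k
  set c : (ZMod N)ˣ := ZMod.unitOfCoprime 2 h2N with hc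
  have hQc : Q = ∑ u : (ZMod N)ˣ, ((x (c * u)) ^ 2)⁻¹ :=
    (Fintype.sum_equiv (Equiv.mulLeft c) (fun u => ((x (c * u)) ^ 2)⁻¹)
      (fun u => ((x u) ^ 2)⁻¹) (fun u => rfl)).symm
  have hab : ∀ u : (ZMod N)ˣ, ‖x (c * u) - 2 * x u‖ ≤ (p : ℝ) ^ (-(k : ℤ)) := by
    intro u
    have h1 : (((c * u : (ZMod N)ˣ) : ZMod N).val : ZMod N) =
        ((2 * (u : ZMod N).val : ℕ) : ZMod N) := by
      rw [ZMod.natCast_val, ZMod.cast_id, Nat.cast_mul, ZMod.natCast_val, ZMod.cast_id,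
        Units.val_mul]
      congr 1
    have h2 := (ZMod.natCast_eq_natCast_iff _ _ _).mp h1
    have h3 : ((p ^ k : ℕ) : ℤ) ∣
        ((2 * (u : ZMod N).val : ℕ) : ℤ) - (((c * u : (ZMod N)ˣ) : ZMod N).val : ℤ) := by
      exact_mod_cast h2.dvd
    have h4 := norm_sub_le_pow (p := p) h3
    rw [norm_sub_rev] at h4
    have e : x (c * u) - 2 * x u =
        ((((c * u : (ZMod N)ˣ) : ZMod N).val : ℤ) : ℚ_[p]) -
          (((2 * (u : ZMod N).val : ℕ) : ℤ) : ℚ_[p]) := by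
      rw [hx]
      push_cast
      ring
    rw [e]
    exact h4
  have hterm : ∀ u : (ZMod N)ˣ,
      ‖((x (c * u)) ^ 2)⁻¹ - ((2 * x u) ^ 2)⁻¹‖ ≤ (p : ℝ) ^ (-(k : ℤ)) := by
    intro u
    have ha : ‖x (c * u)‖ = 1 := hnx _
    have hb : ‖2 * x u‖ = 1 := by rw [norm_mul, hn2, hnx, mul_one]
    have ha0 : x (c * u) ≠ 0 := hx0 _
    have hb0 : (2 : ℚ_[p]) * x u ≠ 0 := by
      intro h; rw [h, norm_zero] at hb; norm_num at hb
    have e : ((x (c * u)) ^ 2)⁻¹ - ((2 * x u) ^ 2)⁻¹ =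
        ((2 * x u - x (c * u)) * (2 * x u + x (c * u))) *
          ((x (c * u)) ^ 2 * (2 * x u) ^ 2)⁻¹ := by
      have hxu : x u ≠ 0 := hx0 u
      field_simp
      ring
    rw [e, norm_mul, norm_mul]
    have hs : ‖2 * x u - x (c * u)‖ ≤ (p : ℝ) ^ (-(k : ℤ)) := by
      rw [norm_sub_rev]; exact hab u
    have ht : ‖2 * x u + x (c * u)‖ ≤ 1 := by
      refine le_trans (Padic.nonarchimedean _ _) ?_
      rw [hb, ha]; norm_num
    have hi : ‖((x (c * u)) ^ 2 * (2 * x u) ^ 2)⁻¹‖ = 1 := by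
      rw [norm_inv, norm_mul, norm_pow, norm_pow, ha, hb]; norm_num
    rw [hi, mul_one]
    calc ‖2 * x u - x (c * u)‖ * ‖2 * x u + x (c * u)‖
        ≤ (p : ℝ) ^ (-(k : ℤ)) * 1 := by
          apply mul_le_mul hs ht (norm_nonneg _) (by positivity)
      _ = (p : ℝ) ^ (-(k : ℤ)) := by ring
  have hQQ : ‖Q - (4 : ℚ_[p])⁻¹ * Q‖ ≤ (p : ℝ) ^ (-(k : ℤ)) := by
    have e : Q - (4 : ℚ_[p])⁻¹ * Q =
        ∑ u : (ZMod N)ˣ, (((x (c * u)) ^ 2)⁻¹ - ((2 * x u) ^ 2)⁻¹) := by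
      rw [Finset.sum_sub_distrib, ← hQc]
      congr 1
      rw [hQ, Finset.mul_sum]
      refine Finset.sum_congr rfl fun u _ => ?_
      rw [mul_pow, mul_inv]
      norm_num
    rw [e]
    exact IsUltrametricDist.norm_sum_le_of_forall_le_of_nonneg (by positivity)
      (fun u _ => hterm u)
  have h3norm : (p : ℝ)⁻¹ ≤ ‖(3 : ℚ_[p])‖ := by
    rcases eq_or_ne p 3 with h3 | h3
    · subst h3
      have h := Padic.norm_p (p := 3)
      have h3e : ((3 : ℕ) : ℚ_[3]) = (3 : ℚ_[3]) := by norm_num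
      rw [h3e] at h
      rw [h]
    · have hd : ¬ p ∣ 3 := fun h => h3 ((Nat.prime_dvd_prime_iff_eq hpp Nat.prime_three).mp h)
      have := norm_nat_coprime (p := p) hd
      push_cast at this
      rw [this]
      have : (1 : ℝ) ≤ p := by exact_mod_cast hpp.one_lt.le
      exact inv_le_one_of_one_le₀ this
  have hn4 : ‖(4 : ℚ_[p])⁻¹‖ = 1 := by
    have : (4 : ℚ_[p]) = 2 * 2 := by norm_num
    rw [norm_inv, this, norm_mul, hn2]
    norm_num
  have hQbound : ‖Q‖ ≤ (p : ℝ) ^ ((1 : ℤ) - k) := by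
    have e : Q - (4 : ℚ_[p])⁻¹ * Q = 3 * (4 : ℚ_[p])⁻¹ * Q := by ring
    rw [e, norm_mul, norm_mul, hn4, mul_one] at hQQ
    have hppos : (0 : ℝ) < p := by exact_mod_cast hpp.pos
    have h30 : (0 : ℝ) < ‖(3 : ℚ_[p])‖ := lt_of_lt_of_le (inv_pos.mpr hppos) h3norm
    have h5 : ‖Q‖ ≤ (p : ℝ) ^ (-(k : ℤ)) / ‖(3 : ℚ_[p])‖ := by
      rw [le_div_iff₀ h30, mul_comm]
      exact hQQ
    refine le_trans h5 ?_
    have h6 : (p : ℝ) ^ (-(k : ℤ)) / ‖(3 : ℚ_[p])‖ ≤ (p : ℝ) ^ (-(k : ℤ)) / (p : ℝ)⁻¹ :=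
      div_le_div_of_nonneg_left (by positivity) (inv_pos.mpr hppos) h3norm
    refine le_trans h6 (le_of_eq ?_)
    rw [div_eq_mul_inv, inv_inv, sub_eq_add_neg, zpow_add₀ (ne_of_gt hppos), zpow_one]
    ring
  -- assemble
  have hPbound : ‖P‖ ≤ (p : ℝ) ^ ((1 : ℤ) - k) := by
    have e : P = (P + Q) + (-Q) := by ring
    rw [e]
    refine le_trans (Padic.nonarchimedean _ _) (max_le ?_ ?_)
    · refine le_trans hPQ ?_
      apply zpow_le_zpow_right₀ (by exact_mod_cast hpp.one_lt.le)
      omega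
    · rw [norm_neg]; exact hQbound
  have hS2 : S = (2 : ℚ_[p])⁻¹ * ((N : ℚ_[p]) * P) := by
    rw [← hpair]
    have h20 : (2 : ℚ_[p]) ≠ 0 := by
      intro h; rw [h, norm_zero] at hn2; norm_num at hn2
    field_simp
  rw [hS2, norm_mul, norm_mul, norm_mul, norm_inv, hn2, hnormN,
    Padic.norm_p_zpow]
  rw [neg_neg]
  calc (p : ℝ) ^ (k : ℤ) * (1⁻¹ * ((p : ℝ) ^ (-(k : ℤ)) * ‖P‖))
      = ‖P‖ := by
        rw [inv_one, one_mul, ← mul_assoc, ← zpow_add₀ (by exact_mod_cast hpp.pos.ne'), add_neg_cancel, zpow_zero, one_mul]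
    _ ≤ (p : ℝ) ^ ((1 : ℤ) - k) := hPbound

end main

/-- For an odd prime `p` and `k ≥ 1`, the normalized sums
`p^{-k} · S_1(p^k) = p^{-k} · ∑_{1 ≤ i ≤ p^k - 1, gcd(i,p)=1} i⁻¹` (taken in `ℚ_p`)
are `p`-adic integers, and they tend to `0` in `ℚ_p` as `k → ∞`. -/
theorem stmt19 (p : ℕ) [Fact p.Prime] (hp : p ≠ 2) :
    (∀ k : ℕ, 1 ≤ k →
      ‖(p : ℚ_[p]) ^ (-(k : ℤ)) *
          ∑ i ∈ (Finset.range (p ^ k)).filter (fun i => Nat.Coprime i p),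
            ((i : ℚ_[p]))⁻¹‖ ≤ 1)
    ∧ Filter.Tendsto
        (fun k : ℕ => (p : ℚ_[p]) ^ (-(k : ℤ)) *
          ∑ i ∈ (Finset.range (p ^ k)).filter (fun i => Nat.Coprime i p),
            ((i : ℚ_[p]))⁻¹)
        Filter.atTop (nhds 0) := by
  have h1p : (1 : ℝ) < p := by exact_mod_cast (Fact.out : p.Prime).one_lt
  have h0p : (0 : ℝ) < p := lt_trans one_pos h1p
  constructor
  · intro k hk
    refine le_trans (key hp hk) ?_
    exact zpow_le_one_of_nonpos₀ h1p.le (by omega)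
  · apply squeeze_zero_norm'
    · filter_upwards [Filter.eventually_ge_atTop 1] with k hk
      exact key hp hk
    · have he : (fun k : ℕ => (p : ℝ) ^ ((1 : ℤ) - k)) =
          fun k : ℕ => (p : ℝ) * ((p : ℝ)⁻¹) ^ k := by
        funext k
        rw [sub_eq_add_neg, zpow_add₀ h0p.ne', zpow_one, zpow_neg, ← inv_zpow, zpow_natCast]
      rw [he]
      have := tendsto_pow_atTop_nhds_zero_of_lt_one (by positivity)
        (inv_lt_one_of_one_lt₀ h1p)
      simpa using this.const_mul (p : ℝ)
end
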